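/- Let Γ be a valued constraint language over a finite set D (possibly infinite as a set of cost functions) that is a core, i.e., every operation in fPol₁⁺(Γ) is bijective. Then there exists a finite sublanguage Γ' ⊆ Γ such that fPol₁⁺(Γ) = fPol₁⁺(Γ'). -/

import Mathlib

/-! Basic framework for Valued Constraint Satisfaction Problems (VCSP):
operations, clones, weightings, weighted clones, cost functions,
(weighted/fractional) polymorphisms, expressibility and weighted relational clones. -/

/-- A `k`-ary operation on `D`. -/
abbrev Op (D : Type) (k : ℕ) : Type := (Fin k → D) → D

/-- The `i`-th `k`-ary projection on `D`. -/
def proj (D : Type) {k : ℕ} (i : Fin k) : Op D k := fun x => x i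

/-- An operation is a projection. -/
def IsProj {D : Type} {k : ℕ} (f : Op D k) : Prop := ∃ i : Fin k, f = proj D i

/-- Superposition `f[g₁,…,g_k]` of a `k`-ary operation with `k` many `l`-ary operations. -/
def superposeOp {D : Type} {k l : ℕ} (f : Op D k) (g : Fin k → Op D l) : Op D l :=
  fun x => f fun i => g i x

/-- A clone of operations on `D`: contains all projections and is closed under superposition. -/
structure IsClone {D : Type} (C : ∀ k, Set (Op D k)) : Prop where
  proj_mem : ∀ (k : ℕ) (i : Fin k), proj D i ∈ C k
  superpose_mem : ∀ (k l : ℕ) (f : Op D k) (g : Fin k → Op D l),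
    f ∈ C k → (∀ i, g i ∈ C l) → superposeOp f g ∈ C l

/-- A `k`-ary weighting of the clone `C`: a rational-valued function on `k`-ary operations,
vanishing outside `C`, summing to `0`, and negative only on projections. -/
structure IsWeighting {D : Type} [Fintype D] [DecidableEq D] (C : ∀ k, Set (Op D k))
    {k : ℕ} (ω : Op D k → ℚ) : Prop where
  support_mem : ∀ f : Op D k, ω f ≠ 0 → f ∈ C k
  sum_zero : ∑ f : Op D k, ω f = 0
  neg_imp_proj : ∀ f : Op D k, ω f < 0 → IsProj f

/-- Superposition of a `k`-ary weighting with `k` many `l`-ary operations. -/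
def wSuperpose {D : Type} [Fintype D] [DecidableEq D] {k l : ℕ}
    (ω : Op D k → ℚ) (g : Fin k → Op D l) : Op D l → ℚ :=
  fun f' => ∑ f ∈ Finset.univ.filter (fun f : Op D k => superposeOp f g = f'), ω f

/-- A weighted clone over the clone `C`: a nonempty family of weightings of `C` closed under
non-negative scaling, addition of weightings of equal arity and proper superposition. -/
structure IsWeightedClone {D : Type} [Fintype D] [DecidableEq D]
    (C : ∀ k, Set (Op D k)) (W : ∀ k, Set (Op D k → ℚ)) : Prop where
  clone : IsClone C
  weighting : ∀ (k : ℕ), ∀ ω ∈ W k, IsWeighting C ω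
  nonempty : ∃ k, (W k).Nonempty
  scale_mem : ∀ (k : ℕ) (c : ℚ), 0 ≤ c → ∀ ω ∈ W k, (fun f => c * ω f) ∈ W k
  add_mem : ∀ (k : ℕ), ∀ ω₁ ∈ W k, ∀ ω₂ ∈ W k, (fun f => ω₁ f + ω₂ f) ∈ W k
  superpose_mem : ∀ (k l : ℕ), ∀ ω ∈ W k, ∀ g : Fin k → Op D l,
    (∀ i, g i ∈ C l) → IsWeighting C (wSuperpose ω g) → wSuperpose ω g ∈ W l

/-- The positive clone of a family of weightings: all projections together with all operations
receiving positive weight from some weighting in the family. -/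
def posClone {D : Type} [Fintype D] [DecidableEq D] (W : ∀ k, Set (Op D k → ℚ)) :
    ∀ k, Set (Op D k) :=
  fun k => {f | IsProj f ∨ ∃ ω ∈ W k, 0 < ω f}

/-- An `r`-ary cost function on `D`, with values in `ℚ ∪ {∞}`. -/
abbrev CostF (D : Type) (r : ℕ) : Type := (Fin r → D) → WithTop ℚ

/-- The feasibility relation of a cost function. -/
def Feas {D : Type} {r : ℕ} (ϱ : CostF D r) : Set (Fin r → D) := {x | ϱ x ≠ ⊤}

/-- Coordinate-wise application of a `k`-ary operation to `k` many `r`-tuples. -/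
def appRows {D : Type} {k r : ℕ} (f : Op D k) (xs : Fin k → Fin r → D) : Fin r → D :=
  fun j => f fun i => xs i j

/-- `f` is a polymorphism of `ϱ`: `Feas ϱ` is closed under coordinate-wise application of `f`. -/
def IsPolymorphism {D : Type} {k r : ℕ} (f : Op D k) (ϱ : CostF D r) : Prop :=
  ∀ xs : Fin k → Fin r → D, (∀ i, xs i ∈ Feas ϱ) → appRows f xs ∈ Feas ϱ

/-- A valued constraint language on `D`: a set of cost functions of various arities. -/
abbrev VLang (D : Type) : Type := Set (Σ r : ℕ, CostF D r)

/-- The clone of polymorphisms of a language. -/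
def Pol {D : Type} (Γ : VLang D) : ∀ k, Set (Op D k) :=
  fun _ => {f | ∀ ϱ ∈ Γ, IsPolymorphism f ϱ.2}

/-- Multiplication of an element of `ℚ ∪ {∞}` by a rational scalar (`c·∞ = ∞`). -/
def qmul (c : ℚ) (x : WithTop ℚ) : WithTop ℚ := WithTop.map (fun q => c * q) x

/-- The sum `∑_f ω(f)·ϱ(f(x₁,…,x_k))`, over operations with non-zero weight. -/
def wSum {D : Type} [Fintype D] [DecidableEq D] {k r : ℕ}
    (ω : Op D k → ℚ) (ϱ : CostF D r) (xs : Fin k → Fin r → D) : WithTop ℚ :=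
  ∑ f ∈ Finset.univ.filter (fun f : Op D k => ω f ≠ 0), qmul (ω f) (ϱ (appRows f xs))

/-- `ω` is a weighted polymorphism of the language `Γ`. -/
def IsWeightedPolymorphism {D : Type} [Fintype D] [DecidableEq D] (Γ : VLang D)
    {k : ℕ} (ω : Op D k → ℚ) : Prop :=
  IsWeighting (Pol Γ) ω ∧
    ∀ ϱ ∈ Γ, ∀ xs : Fin k → Fin ϱ.1 → D, (∀ i, xs i ∈ Feas ϱ.2) → wSum ω ϱ.2 xs ≤ 0

/-- The weighted polymorphisms of a language. -/
def wPol {D : Type} [Fintype D] [DecidableEq D] (Γ : VLang D) :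
    ∀ k, Set (Op D k → ℚ) :=
  fun _ => {ω | IsWeightedPolymorphism Γ ω}

/-- The positive clone `Pol⁺(Γ)` of a language. -/
def PolPlus {D : Type} [Fintype D] [DecidableEq D] (Γ : VLang D) : ∀ k, Set (Op D k) :=
  posClone (wPol Γ)

/-- The map `D → D` induced by a unary operation. -/
def unaryFun {D : Type} (f : Op D 1) : D → D := fun x => f fun _ => x

/-- A language is a core if every unary operation in its positive clone is bijective. -/
def IsCore {D : Type} [Fintype D] [DecidableEq D] (Γ : VLang D) : Prop :=
  ∀ f ∈ PolPlus Γ 1, Function.Bijective (unaryFun f)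

/-- An idempotent operation. -/
def Idem {D : Type} {k : ℕ} (f : Op D k) : Prop := ∀ x : D, (f fun _ => x) = x

/-- A cyclic operation: `f(x₁,…,x_k) = f(x₂,…,x_k,x₁)`. -/
def CyclicOp {D : Type} {k : ℕ} (f : Op D k) : Prop :=
  ∀ x : Fin k → D, f x = f (x ∘ ⇑(finRotate k))

/-- A conservative operation. -/
def Conservative {D : Type} {k : ℕ} (f : Op D k) : Prop :=
  ∀ x : Fin k → D, ∃ i, f x = x i

/-- A Taylor operation. -/
def IsTaylor {D : Type} {k : ℕ} (t : Op D k) : Prop :=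
  Idem t ∧ ∀ j : Fin k, ∃ a b : Fin k → Fin 2, a j = 0 ∧ b j = 1 ∧
    ∀ u : Fin 2 → D, (t fun i => u (a i)) = t fun i => u (b i)

/-- An instance of `VCSP(Γ)` with variable set `V`: a finite multiset of constraints,
each a tuple of variables together with a cost function from `Γ`. -/
structure VInstance (D : Type) (Γ : VLang D) (V : Type) where
  cons : Multiset (Σ r : ℕ, (Fin r → V) × CostF D r)
  mem_lang : ∀ c ∈ cons, (⟨c.1, c.2.2⟩ : Σ r : ℕ, CostF D r) ∈ Γ

/-- The cost of an assignment for a VCSP instance. -/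
def VInstance.cost {D V : Type} {Γ : VLang D} (I : VInstance D Γ V) (s : V → D) :
    WithTop ℚ :=
  (I.cons.map fun c => c.2.2 fun i => s (c.2.1 i)).sum

/-- A cost function is expressible over a language `Δ`. -/
def Expressible {D : Type} [Fintype D] [DecidableEq D] (Δ : VLang D) {r : ℕ}
    (ϱ : CostF D r) : Prop :=
  ∃ (n : ℕ) (I : VInstance D Δ (Fin n)) (v : Fin r → Fin n),
    ∀ x : Fin r → D,
      ϱ x = (Finset.univ.filter fun s : Fin n → D => ∀ i, s (v i) = x i).inf fun s => I.cost s

/-- A language is closed under expressibility, non-negative scaling and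
addition of rational constants. -/
def IsWClosed {D : Type} [Fintype D] [DecidableEq D] (Δ : VLang D) : Prop :=
  (∀ (r : ℕ) (ϱ : CostF D r), Expressible Δ ϱ → (⟨r, ϱ⟩ : Σ r : ℕ, CostF D r) ∈ Δ) ∧
  (∀ (r : ℕ) (ϱ : CostF D r) (c : ℚ), 0 ≤ c → (⟨r, ϱ⟩ : Σ r : ℕ, CostF D r) ∈ Δ →
    (⟨r, fun x => qmul c (ϱ x)⟩ : Σ r : ℕ, CostF D r) ∈ Δ) ∧
  (∀ (r : ℕ) (ϱ : CostF D r) (c : ℚ), (⟨r, ϱ⟩ : Σ r : ℕ, CostF D r) ∈ Δ →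
    (⟨r, fun x => ϱ x + (c : WithTop ℚ)⟩ : Σ r : ℕ, CostF D r) ∈ Δ)

/-- The weighted relational clone generated by `Γ`: the smallest language containing `Γ`
closed under expressibility, non-negative scaling and addition of rational constants. -/
def wRelClo {D : Type} [Fintype D] [DecidableEq D] (Γ : VLang D) : VLang D :=
  ⋂₀ {Δ : VLang D | Γ ⊆ Δ ∧ IsWClosed Δ}

/-- The weighting `(1/k)(∑_i 1_{f_i} − ∑_i 1_{π_i})` associated with a `k`-tuple of
`k`-ary operations (a multimorphism), weights added with multiplicity. -/
def multimorphismW {D : Type} [Fintype D] [DecidableEq D] {k : ℕ} (F : Fin k → Op D k) :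
    Op D k → ℚ :=
  fun g => (1 / (k : ℚ)) *
    (((Finset.univ.filter fun i : Fin k => F i = g).card : ℚ) -
     ((Finset.univ.filter fun i : Fin k => proj D i = g).card : ℚ))

/-- `Γ` admits the multimorphism `⟨F 0, …, F (k-1)⟩`. -/
def AdmitsMultimorphism {D : Type} [Fintype D] [DecidableEq D] {k : ℕ}
    (Γ : VLang D) (F : Fin k → Op D k) : Prop :=
  multimorphismW F ∈ wPol Γ k

/-- An `m`-ary fractional operation: a probability distribution on `m`-ary operations. -/
def IsFracOp {D : Type} [Fintype D] [DecidableEq D] {m : ℕ} (ω : Op D m → ℝ) : Prop :=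
  (∀ f, 0 ≤ ω f) ∧ ∑ f : Op D m, ω f = 1

/-- Multiplication of an element of `ℚ ∪ {∞}` by a real scalar, landing in `ℝ ∪ {∞}`. -/
def rmul (c : ℝ) (x : WithTop ℚ) : WithTop ℝ := WithTop.map (fun q : ℚ => c * (q : ℝ)) x

/-- `ω` is a fractional polymorphism of the language `Γ`. -/
def IsFracPolymorphism {D : Type} [Fintype D] [DecidableEq D] (Γ : VLang D) {m : ℕ}
    (ω : Op D m → ℝ) : Prop :=
  IsFracOp ω ∧ ∀ ϱ ∈ Γ, ∀ xs : Fin m → Fin ϱ.1 → D, (∀ i, xs i ∈ Feas ϱ.2) →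
    (∑ g ∈ Finset.univ.filter fun g : Op D m => 0 < ω g, rmul (ω g) (ϱ.2 (appRows g xs)))
      ≤ rmul (1 / (m : ℝ)) (∑ i : Fin m, ϱ.2 (xs i))

/-- The positive clone `fPol⁺(Γ)` defined via fractional polymorphisms. -/
def fPolPlus {D : Type} [Fintype D] [DecidableEq D] (Γ : VLang D) : ∀ k, Set (Op D k) :=
  fun k => {f | IsProj f ∨ ∃ ω : Op D k → ℝ, IsFracPolymorphism Γ ω ∧ 0 < ω f}

/-- Application of a binary operation to two elements. -/
def ap2 {D : Type} (f : Op D 2) (a b : D) : D := f ![a, b]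

/-- Application of a ternary operation to three elements. -/
def ap3 {D : Type} (f : Op D 3) (a b c : D) : D := f ![a, b, c]

/-- A ternary operation restricts to a majority operation on a subset `S`. -/
def IsMajorityOn {D : Type} (f : Op D 3) (S : Set D) : Prop :=
  ∀ x ∈ S, ∀ y ∈ S, ap3 f x x y = x ∧ ap3 f x y x = x ∧ ap3 f y x x = x

/-- A ternary operation restricts to a minority operation on a subset `S`. -/
def IsMinorityOn {D : Type} (f : Op D 3) (S : Set D) : Prop :=
  ∀ x ∈ S, ∀ y ∈ S, ap3 f x x y = y ∧ ap3 f x y x = y ∧ ap3 f y x x = y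

/-- The language `Γ_c`: `Γ` together with all unary cost functions `N_a`
(`N_a(a) = 0`, `N_a(x) = ∞` for `x ≠ a`). -/
def withConstants {D : Type} [DecidableEq D] (Γ : VLang D) : VLang D :=
  Γ ∪ {p : Σ r : ℕ, CostF D r |
        ∃ a : D, p = ⟨1, fun x => if x 0 = a then (0 : WithTop ℚ) else ⊤⟩}

/-- A language is conservative if it contains every `{0,1}`-valued unary cost function. -/
def ConservativeLang {D : Type} (Γ : VLang D) : Prop :=
  ∀ ϱ : CostF D 1, (∀ x, ϱ x = 0 ∨ ϱ x = 1) → (⟨1, ϱ⟩ : Σ r : ℕ, CostF D r) ∈ Γ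

/-- The coordinate-wise action of a `k`-ary operation on `A` on the power `A^n`. -/
def opPow {A : Type} (n : ℕ) {k : ℕ} (f : Op A k) : Op (Fin n → A) k :=
  fun xs c => f fun i => xs i c

/-- Regrouping an `(n·r)`-tuple over `A` into an `r`-tuple of elements of `A^n`. -/
def regroup (A : Type) (n r : ℕ) (y : Fin (n * r) → A) : Fin r → Fin n → A :=
  fun j c => y (finProdFinEquiv (c, j))

namespace S14

open Finset Function

variable {D : Type} [Fintype D] [DecidableEq D]

/-! ### Unary operations: composition, identity -/

def idop (D : Type) : Op D 1 := proj D 0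

lemma fin1_eta (x : Fin 1 → D) : (fun _ : Fin 1 => x 0) = x :=
  funext fun i => by rw [Subsingleton.elim i 0]

lemma op_apply (f : Op D 1) (x : Fin 1 → D) : f x = unaryFun f (x 0) := by
  show f x = f fun _ => x 0
  rw [fin1_eta]

lemma uf_inj : Function.Injective (unaryFun : Op D 1 → (D → D)) := by
  intro f g h
  funext x
  rw [op_apply f, op_apply g, h]

def cmp (u v : Op D 1) : Op D 1 := fun t => u fun _ => v t

lemma uf_cmp (u v : Op D 1) : unaryFun (cmp u v) = unaryFun u ∘ unaryFun v := rfl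

lemma uf_idop : unaryFun (idop D) = id := rfl

lemma cmp_assoc (u v w : Op D 1) : cmp (cmp u v) w = cmp u (cmp v w) := rfl

lemma cmp_idop_left (v : Op D 1) : cmp (idop D) v = v := rfl

lemma cmp_idop_right (u : Op D 1) : cmp u (idop D) = u := by
  funext t
  show u (fun _ => t 0) = u t
  rw [fin1_eta]

def act (g : Op D 1) {r : ℕ} (x : Fin r → D) : Fin r → D := fun j => unaryFun g (x j)

lemma act_idop {r : ℕ} (x : Fin r → D) : act (idop D) x = x := rfl

lemma act_cmp (u v : Op D 1) {r : ℕ} (x : Fin r → D) : act (cmp u v) x = act u (act v x) := rfl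

lemma appRows_eq (g : Op D 1) {r : ℕ} (xs : Fin 1 → Fin r → D) : appRows g xs = act g (xs 0) := by
  funext j
  show g (fun i => xs i j) = g (fun _ => xs 0 j)
  congr 1
  funext i
  rw [Subsingleton.elim i 0]

/-! ### The clean real-valued reformulation of unary fractional polymorphisms -/

def qv {r : ℕ} (ϱ : CostF D r) (y : Fin r → D) : ℝ := (((ϱ y).untopD 0 : ℚ) : ℝ)

def UFP (Δ : VLang D) (ω : Op D 1 → ℝ) : Prop :=
  (∀ g, 0 ≤ ω g) ∧ ((∑ g : Op D 1, ω g) = 1) ∧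
  ∀ ϱ ∈ Δ, ∀ x : Fin ϱ.1 → D, ϱ.2 x ≠ ⊤ →
    (∀ g : Op D 1, ϱ.2 (act g x) = ⊤ → ω g ≤ 0) ∧
    ((∑ g : Op D 1, ω g * qv ϱ.2 (act g x)) ≤ qv ϱ.2 x)

lemma qv_coe {r : ℕ} (ϱ : CostF D r) (y : Fin r → D) (a : ℚ) (h : ϱ y = (a : WithTop ℚ)) :
    qv ϱ y = (a : ℝ) := by
  simp [qv, h]

lemma rmul_coe (c : ℝ) (a : ℚ) : rmul c (a : WithTop ℚ) = ((c * (a : ℝ) : ℝ) : WithTop ℝ) := rfl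

lemma rmul_top (c : ℝ) : rmul c ⊤ = ⊤ := rfl

lemma cond_iff (ω : Op D 1 → ℝ) (h0 : ∀ g, 0 ≤ ω g) {r : ℕ} (ϱ : CostF D r)
    (x : Fin r → D) (hx : ϱ x ≠ ⊤) :
    ((∑ g ∈ Finset.univ.filter fun g : Op D 1 => 0 < ω g, rmul (ω g) (ϱ (act g x))) ≤
       rmul 1 (ϱ x)) ↔
    ((∀ g : Op D 1, ϱ (act g x) = ⊤ → ω g ≤ 0) ∧
      ((∑ g : Op D 1, ω g * qv ϱ (act g x)) ≤ qv ϱ x)) := by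
  obtain ⟨a, ha⟩ := WithTop.ne_top_iff_exists.mp hx
  have hR : rmul 1 (ϱ x) = (((a : ℝ) : ℝ) : WithTop ℝ) := by
    rw [← ha, rmul_coe]
    norm_num
  have hqx : qv ϱ x = (a : ℝ) := qv_coe ϱ x a ha.symm
  have hext : (∀ g : Op D 1, ϱ (act g x) = ⊤ → ω g ≤ 0) →
      (∑ g : Op D 1, ω g * qv ϱ (act g x))
        = ∑ g ∈ Finset.univ.filter fun g : Op D 1 => 0 < ω g, ω g * qv ϱ (act g x) := by
    intro _
    symm
    apply Finset.sum_subset (Finset.filter_subset _ _)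
    intro g _ hg
    simp only [Finset.mem_filter, Finset.mem_univ, true_and, not_lt] at hg
    rw [le_antisymm hg (h0 g), zero_mul]
  have key : (∀ g : Op D 1, ϱ (act g x) = ⊤ → ω g ≤ 0) →
      (∑ g ∈ Finset.univ.filter fun g : Op D 1 => 0 < ω g, rmul (ω g) (ϱ (act g x)))
        = (((∑ g ∈ Finset.univ.filter fun g : Op D 1 => 0 < ω g,
            ω g * qv ϱ (act g x) : ℝ)) : WithTop ℝ) := by
    intro hgood
    rw [WithTop.coe_sum]
    refine Finset.sum_congr rfl ?_
    intro g hg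
    simp only [Finset.mem_filter, Finset.mem_univ, true_and] at hg
    have hne : ϱ (act g x) ≠ ⊤ := fun h => absurd (hgood g h) (not_le.mpr hg)
    obtain ⟨b, hb⟩ := WithTop.ne_top_iff_exists.mp hne
    rw [← hb, rmul_coe, qv_coe ϱ _ b hb.symm]
  constructor
  · intro H
    have hgood : ∀ g : Op D 1, ϱ (act g x) = ⊤ → ω g ≤ 0 := by
      intro g hg
      by_contra hpos
      push_neg at hpos
      have hmem : g ∈ Finset.univ.filter (fun g : Op D 1 => 0 < ω g) := by
        simp [hpos]
      have htop : (∑ g ∈ Finset.univ.filter fun g : Op D 1 => 0 < ω g,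
          rmul (ω g) (ϱ (act g x))) = ⊤ := by
        rw [← Finset.add_sum_erase _ _ hmem, hg, rmul_top, top_add]
      rw [htop, hR] at H
      exact (WithTop.not_top_le_coe _) H
    refine ⟨hgood, ?_⟩
    rw [key hgood, hR] at H
    rw [hqx, hext hgood]
    exact_mod_cast H
    -- WithTop.coe_le_coe.mp H
  · rintro ⟨hgood, hsum⟩
    rw [key hgood, hR]
    rw [hqx, hext hgood] at hsum
    exact_mod_cast hsum

lemma UFP_iff (Δ : VLang D) (ω : Op D 1 → ℝ) : UFP Δ ω ↔ IsFracPolymorphism Δ ω := by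
  have h11 : (1 / ((1 : ℕ) : ℝ)) = (1 : ℝ) := by norm_num
  constructor
  · rintro ⟨h0, h1, h2⟩
    refine ⟨⟨h0, h1⟩, ?_⟩
    intro ϱ hϱ xs hxs
    have hx : ϱ.2 (xs 0) ≠ ⊤ := hxs 0
    have hrw : (∑ g ∈ Finset.univ.filter fun g : Op D 1 => 0 < ω g,
        rmul (ω g) (ϱ.2 (appRows g xs)))
        = ∑ g ∈ Finset.univ.filter fun g : Op D 1 => 0 < ω g,
            rmul (ω g) (ϱ.2 (act g (xs 0))) :=
      Finset.sum_congr rfl fun g _ => by rw [appRows_eq]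
    rw [hrw, Fin.sum_univ_one, h11]
    exact (cond_iff ω h0 ϱ.2 (xs 0) hx).2 (h2 ϱ hϱ (xs 0) hx)
  · rintro ⟨⟨h0, h1⟩, h2⟩
    refine ⟨h0, h1, ?_⟩
    intro ϱ hϱ x hx
    apply (cond_iff ω h0 ϱ.2 x hx).1
    have H := h2 ϱ hϱ (fun _ => x) (fun _ => hx)
    rw [Fin.sum_univ_one, h11] at H
    have hrw : (∑ g ∈ Finset.univ.filter fun g : Op D 1 => 0 < ω g,
        rmul (ω g) (ϱ.2 (appRows g (fun _ => x))))
        = ∑ g ∈ Finset.univ.filter fun g : Op D 1 => 0 < ω g,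
            rmul (ω g) (ϱ.2 (act g x)) :=
      Finset.sum_congr rfl fun g _ => by rw [appRows_eq]
    rwa [hrw] at H

lemma mem_fPolPlus_of_UFP {Δ : VLang D} {ω : Op D 1 → ℝ} (h : UFP Δ ω) {f : Op D 1}
    (hf : 0 < ω f) : f ∈ fPolPlus Δ 1 :=
  Or.inr ⟨ω, (UFP_iff Δ ω).mp h, hf⟩

lemma fPolPlus_antitone {Δ' Δ : VLang D} (h : Δ' ⊆ Δ) : fPolPlus Δ 1 ⊆ fPolPlus Δ' 1 := by
  rintro f (hf | ⟨ω, ⟨hop, hcond⟩, hpos⟩)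
  · exact Or.inl hf
  · exact Or.inr ⟨ω, ⟨hop, fun ϱ hϱ => hcond ϱ (h hϱ)⟩, hpos⟩

lemma UFP_anti {Δ' Δ : VLang D} (h : Δ' ⊆ Δ) {ω : Op D 1 → ℝ} (hω : UFP Δ ω) : UFP Δ' ω :=
  ⟨hω.1, hω.2.1, fun ϱ hϱ => hω.2.2 ϱ (h hϱ)⟩

lemma exists_UFP_of_mem {Δ : VLang D} {f : Op D 1} (hf : f ∈ fPolPlus Δ 1)
    (hnp : ¬ IsProj f) : ∃ ω, UFP Δ ω ∧ 0 < ω f := by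
  rcases hf with h | ⟨ω, h1, h2⟩
  · exact absurd h hnp
  · exact ⟨ω, (UFP_iff Δ ω).mpr h1, h2⟩

lemma isProj_unary {f : Op D 1} (h : IsProj f) : f = idop D := by
  obtain ⟨i, rfl⟩ := h
  rw [Subsingleton.elim i 0]
  rfl

end S14
namespace S14

set_option linter.unusedSectionVars false
set_option maxHeartbeats 1000000

variable {D : Type} [Fintype D] [DecidableEq D]

/-! ### Convolution of weight functions -/

noncomputable def cnv (α β : Op D 1 → ℝ) : Op D 1 → ℝ :=
  fun g => ∑ p : Op D 1 × Op D 1, if cmp p.1 p.2 = g then α p.1 * β p.2 else 0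

lemma cnv_apply (α β : Op D 1 → ℝ) (g : Op D 1) :
    cnv α β g = ∑ u : Op D 1, ∑ v : Op D 1, if cmp u v = g then α u * β v else 0 := by
  rw [cnv, Fintype.sum_prod_type]

lemma cnv_nonneg {α β : Op D 1 → ℝ} (hα : ∀ g, 0 ≤ α g) (hβ : ∀ g, 0 ≤ β g) (g : Op D 1) :
    0 ≤ cnv α β g :=
  Finset.sum_nonneg fun p _ => by
    split
    · exact mul_nonneg (hα _) (hβ _)
    · exact le_rfl

lemma cnv_single_le {α β : Op D 1 → ℝ} (hα : ∀ g, 0 ≤ α g) (hβ : ∀ g, 0 ≤ β g)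
    (u v : Op D 1) : α u * β v ≤ cnv α β (cmp u v) := by
  have hle : (if cmp u v = cmp u v then α u * β v else 0) ≤ cnv α β (cmp u v) :=
    Finset.single_le_sum (f := fun p : Op D 1 × Op D 1 =>
        if cmp p.1 p.2 = cmp u v then α p.1 * β p.2 else 0)
      (fun p _ => by
        split
        · exact mul_nonneg (hα _) (hβ _)
        · exact le_rfl)
      (Finset.mem_univ ((u, v) : Op D 1 × Op D 1))
  rwa [if_pos rfl] at hle

lemma cnv_pos_iff {α β : Op D 1 → ℝ} (hα : ∀ g, 0 ≤ α g) (hβ : ∀ g, 0 ≤ β g) (g : Op D 1) :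
    0 < cnv α β g ↔ ∃ u v, cmp u v = g ∧ 0 < α u ∧ 0 < β v := by
  constructor
  · intro h
    by_contra hc
    push_neg at hc
    have hle : cnv α β g ≤ 0 := Finset.sum_nonpos fun p _ => by
      by_cases hcmp : cmp p.1 p.2 = g
      · rw [if_pos hcmp]
        rcases (hα p.1).lt_or_eq with h1 | h1
        · have h2 := hc p.1 p.2 hcmp h1
          nlinarith
        · rw [← h1, zero_mul]
      · rw [if_neg hcmp]
    exact absurd h (not_lt.mpr hle)
  · rintro ⟨u, v, rfl, hu, hv⟩
    exact lt_of_lt_of_le (mul_pos hu hv) (cnv_single_le hα hβ u v)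

lemma cnv_weight (α β c : Op D 1 → ℝ) :
    (∑ g : Op D 1, cnv α β g * c g)
      = ∑ u : Op D 1, ∑ v : Op D 1, α u * β v * c (cmp u v) := by
  have step1 : (∑ g : Op D 1, cnv α β g * c g)
      = ∑ g : Op D 1, ∑ u : Op D 1, ∑ v : Op D 1,
          (if cmp u v = g then α u * β v * c g else 0) := by
    refine Finset.sum_congr rfl fun g _ => ?_
    rw [cnv_apply, Finset.sum_mul]
    refine Finset.sum_congr rfl fun u _ => ?_
    rw [Finset.sum_mul]
    refine Finset.sum_congr rfl fun v _ => ?_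
    rw [ite_mul, zero_mul]
  rw [step1, Finset.sum_comm]
  refine Finset.sum_congr rfl fun u _ => ?_
  rw [Finset.sum_comm]
  refine Finset.sum_congr rfl fun v _ => ?_
  rw [Finset.sum_ite_eq]
  simp

lemma cnv_total (α β : Op D 1 → ℝ) :
    (∑ g : Op D 1, cnv α β g) = (∑ u : Op D 1, α u) * (∑ v : Op D 1, β v) := by
  have h := cnv_weight α β (fun _ => 1)
  simp only [mul_one] at h
  rw [h, Finset.sum_mul]
  refine Finset.sum_congr rfl fun u _ => ?_
  rw [Finset.mul_sum]

/-- Extensionality via testing against arbitrary weights. -/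
lemma weight_ext {μ ν : Op D 1 → ℝ}
    (h : ∀ c : Op D 1 → ℝ, (∑ g : Op D 1, μ g * c g) = ∑ g : Op D 1, ν g * c g) : μ = ν := by
  funext g₀
  have h' := h (fun g => if g = g₀ then 1 else 0)
  simpa [mul_ite, mul_one, mul_zero, Finset.sum_ite_eq'] using h'

lemma cnv_assoc (α β γ : Op D 1 → ℝ) : cnv (cnv α β) γ = cnv α (cnv β γ) := by
  apply weight_ext
  intro c
  rw [cnv_weight, cnv_weight]
  calc (∑ a : Op D 1, ∑ w : Op D 1, cnv α β a * γ w * c (cmp a w))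
      = ∑ w : Op D 1, ∑ a : Op D 1, cnv α β a * (γ w * c (cmp a w)) := by
        rw [Finset.sum_comm]
        exact Finset.sum_congr rfl fun w _ => Finset.sum_congr rfl fun a _ => by ring
    _ = ∑ w : Op D 1, ∑ u : Op D 1, ∑ v : Op D 1, α u * β v * (γ w * c (cmp (cmp u v) w)) :=
        Finset.sum_congr rfl fun w _ => cnv_weight α β (fun a => γ w * c (cmp a w))
    _ = ∑ u : Op D 1, ∑ v : Op D 1, ∑ w : Op D 1, α u * β v * (γ w * c (cmp (cmp u v) w)) := by
        rw [Finset.sum_comm]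
        exact Finset.sum_congr rfl fun u _ => Finset.sum_comm
    _ = ∑ u : Op D 1, ∑ a : Op D 1, cnv β γ a * (α u * c (cmp u a)) := by
        refine Finset.sum_congr rfl fun u _ => ?_
        calc (∑ v : Op D 1, ∑ w : Op D 1, α u * β v * (γ w * c (cmp (cmp u v) w)))
            = ∑ v : Op D 1, ∑ w : Op D 1, β v * γ w * (α u * c (cmp v w |> cmp u)) := by
              refine Finset.sum_congr rfl fun v _ => Finset.sum_congr rfl fun w _ => ?_
              rw [cmp_assoc]
              ring
          _ = ∑ a : Op D 1, cnv β γ a * (α u * c (cmp u a)) :=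
              (cnv_weight β γ (fun a => α u * c (cmp u a))).symm
    _ = ∑ u : Op D 1, ∑ a : Op D 1, α u * cnv β γ a * c (cmp u a) :=
        Finset.sum_congr rfl fun u _ => Finset.sum_congr rfl fun a _ => by ring

/-! ### Dirac weights, powers, Cesàro averages -/

noncomputable def dl (a : Op D 1) : Op D 1 → ℝ := fun g => if g = a then 1 else 0

lemma dl_nonneg (a g : Op D 1) : 0 ≤ dl a g := by
  unfold dl; split <;> norm_num

lemma dl_sum (a : Op D 1) : (∑ g : Op D 1, dl a g) = 1 := by
  simp [dl]

lemma cnv_dl_right (α : Op D 1 → ℝ) : cnv α (dl (idop D)) = α := by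
  funext g
  rw [cnv_apply]
  have h : ∀ u : Op D 1, (∑ v : Op D 1, if cmp u v = g then α u * dl (idop D) v else 0)
      = if u = g then α u else 0 := by
    intro u
    rw [Finset.sum_eq_single (idop D)]
    · rw [cmp_idop_right]
      simp [dl]
    · intro v _ hv
      simp [dl, hv]
    · simp
  rw [Finset.sum_congr rfl fun u _ => h u]
  simp [Finset.sum_ite_eq']

noncomputable def pw (ω : Op D 1 → ℝ) : ℕ → (Op D 1 → ℝ)
  | 0 => dl (idop D)
  | n + 1 => cnv ω (pw ω n)

noncomputable def ces (ω : Op D 1 → ℝ) (n : ℕ) : Op D 1 → ℝ :=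
  fun g => (∑ k ∈ Finset.range (n + 1), pw ω (k + 1) g) / (n + 1 : ℝ)

noncomputable def mix (ω : Op D 1 → ℝ) : Op D 1 → ℝ := fun g => (ω g + dl (idop D) g) / 2

/-! ### UFP is preserved by these operations -/

lemma UFP_dl (Δ : VLang D) : UFP Δ (dl (idop D)) := by
  refine ⟨dl_nonneg _, dl_sum _, ?_⟩
  intro ϱ hϱ x hx
  constructor
  · intro g hg
    unfold dl
    split
    · rename_i he
      rw [he] at hg
      exact absurd hg hx
    · exact le_rfl
  · have h : (∑ g : Op D 1, dl (idop D) g * qv ϱ.2 (act g x)) = qv ϱ.2 x := by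
      simp only [dl, ite_mul, one_mul, zero_mul, Finset.sum_ite_eq', Finset.mem_univ, if_true]
      exact congrArg (qv ϱ.2) (act_idop x)
    rw [h]

lemma UFP_cnv {Δ : VLang D} {α β : Op D 1 → ℝ} (hα : UFP Δ α) (hβ : UFP Δ β) :
    UFP Δ (cnv α β) := by
  obtain ⟨hα0, hα1, hα2⟩ := hα
  obtain ⟨hβ0, hβ1, hβ2⟩ := hβ
  refine ⟨cnv_nonneg hα0 hβ0, by rw [cnv_total, hα1, hβ1, one_mul], ?_⟩
  intro ϱ hϱ x hx
  constructor
  · intro g hg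
    by_contra hpos
    push_neg at hpos
    obtain ⟨u, v, hcmp, hu, hv⟩ := (cnv_pos_iff hα0 hβ0 g).1 hpos
    have hfv : ϱ.2 (act v x) ≠ ⊤ := fun h => absurd ((hβ2 ϱ hϱ x hx).1 v h) (not_le.2 hv)
    have hfu : ϱ.2 (act u (act v x)) ≠ ⊤ :=
      fun h => absurd ((hα2 ϱ hϱ (act v x) hfv).1 u h) (not_le.2 hu)
    rw [← hcmp, act_cmp] at hg
    exact hfu hg
  · rw [cnv_weight]
    have step1 : ∀ v : Op D 1,
        (∑ u : Op D 1, α u * β v * qv ϱ.2 (act (cmp u v) x)) ≤ β v * qv ϱ.2 (act v x) := by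
      intro v
      rcases (hβ0 v).lt_or_eq with h | h
      · have hfv : ϱ.2 (act v x) ≠ ⊤ := fun ht => absurd ((hβ2 ϱ hϱ x hx).1 v ht) (not_le.2 h)
        have hle := (hα2 ϱ hϱ (act v x) hfv).2
        calc (∑ u : Op D 1, α u * β v * qv ϱ.2 (act (cmp u v) x))
            = β v * ∑ u : Op D 1, α u * qv ϱ.2 (act u (act v x)) := by
              rw [Finset.mul_sum]
              refine Finset.sum_congr rfl fun u _ => ?_
              rw [act_cmp]
              ring
          _ ≤ β v * qv ϱ.2 (act v x) := mul_le_mul_of_nonneg_left hle (le_of_lt h)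
      · simp [← h]
    calc (∑ u : Op D 1, ∑ v : Op D 1, α u * β v * qv ϱ.2 (act (cmp u v) x))
        = ∑ v : Op D 1, ∑ u : Op D 1, α u * β v * qv ϱ.2 (act (cmp u v) x) :=
          Finset.sum_comm
      _ ≤ ∑ v : Op D 1, β v * qv ϱ.2 (act v x) := Finset.sum_le_sum fun v _ => step1 v
      _ ≤ qv ϱ.2 x := (hβ2 ϱ hϱ x hx).2

lemma UFP_mix {Δ : VLang D} {ω : Op D 1 → ℝ} (hω : UFP Δ ω) : UFP Δ (mix ω) := by
  obtain ⟨h0, h1, h2⟩ := hω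
  obtain ⟨d0, d1, d2⟩ := UFP_dl (D := D) Δ
  refine ⟨fun g => by unfold mix; have := h0 g; have := dl_nonneg (idop D) g; positivity, ?_, ?_⟩
  · simp only [mix]
    rw [← Finset.sum_div, Finset.sum_add_distrib, h1, d1]
    norm_num
  · intro ϱ hϱ x hx
    constructor
    · intro g hg
      have a1 := (h2 ϱ hϱ x hx).1 g hg
      have a2 := (d2 ϱ hϱ x hx).1 g hg
      unfold mix
      linarith
    · have a1 := (h2 ϱ hϱ x hx).2
      have a2 := (d2 ϱ hϱ x hx).2
      have hpt : ∀ g : Op D 1, mix ω g * qv ϱ.2 (act g x)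
          = (ω g * qv ϱ.2 (act g x) + dl (idop D) g * qv ϱ.2 (act g x)) / 2 := by
        intro g
        simp only [mix]
        ring
      have hrw : (∑ g : Op D 1, mix ω g * qv ϱ.2 (act g x))
          = ((∑ g : Op D 1, ω g * qv ϱ.2 (act g x))
            + ∑ g : Op D 1, dl (idop D) g * qv ϱ.2 (act g x)) / 2 := by
        rw [Finset.sum_congr rfl fun g _ => hpt g, ← Finset.sum_div, Finset.sum_add_distrib]
      rw [hrw]
      linarith

lemma UFP_pw {Δ : VLang D} {ω : Op D 1 → ℝ} (hω : UFP Δ ω) : ∀ n, UFP Δ (pw ω n)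
  | 0 => UFP_dl Δ
  | n + 1 => UFP_cnv hω (UFP_pw hω n)

lemma UFP_ces {Δ : VLang D} {ω : Op D 1 → ℝ} (hω : UFP Δ ω) (n : ℕ) : UFP Δ (ces ω n) := by
  have hp : ∀ k, UFP Δ (pw ω (k + 1)) := fun k => UFP_pw hω (k + 1)
  have hpos : (0 : ℝ) < (n + 1 : ℝ) := by positivity
  refine ⟨?_, ?_, ?_⟩
  · intro g
    simp only [ces]
    have : 0 ≤ ∑ k ∈ Finset.range (n + 1), pw ω (k + 1) g :=
      Finset.sum_nonneg fun k _ => (hp k).1 g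
    positivity
  · simp only [ces]
    rw [← Finset.sum_div, Finset.sum_comm]
    have h : ∀ k ∈ Finset.range (n + 1), (∑ g : Op D 1, pw ω (k + 1) g) = 1 :=
      fun k _ => (hp k).2.1
    rw [Finset.sum_congr rfl h, Finset.sum_const, Finset.card_range, nsmul_eq_mul, mul_one]
    push_cast
    rw [div_self (ne_of_gt hpos)]
  · intro ϱ hϱ x hx
    constructor
    · intro g hg
      simp only [ces]
      have hzero : ∀ k ∈ Finset.range (n + 1), pw ω (k + 1) g = 0 := fun k _ =>
        le_antisymm ((hp k).2.2 ϱ hϱ x hx |>.1 g hg) ((hp k).1 g)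
      rw [Finset.sum_congr rfl hzero, Finset.sum_const]
      simp
    · have hpt : ∀ g : Op D 1, ces ω n g * qv ϱ.2 (act g x)
          = (∑ k ∈ Finset.range (n + 1),
              pw ω (k + 1) g * qv ϱ.2 (act g x)) / (n + 1 : ℝ) := by
        intro g
        simp only [ces]
        rw [div_mul_eq_mul_div, Finset.sum_mul]
      have hrw : (∑ g : Op D 1, ces ω n g * qv ϱ.2 (act g x))
          = (∑ k ∈ Finset.range (n + 1),
              ∑ g : Op D 1, pw ω (k + 1) g * qv ϱ.2 (act g x)) / (n + 1 : ℝ) := by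
        rw [Finset.sum_congr rfl fun g _ => hpt g, ← Finset.sum_div, Finset.sum_comm]
      rw [hrw]
      have hb : (∑ k ∈ Finset.range (n + 1),
          ∑ g : Op D 1, pw ω (k + 1) g * qv ϱ.2 (act g x))
          ≤ (n + 1 : ℝ) * qv ϱ.2 x := by
        calc (∑ k ∈ Finset.range (n + 1), ∑ g : Op D 1, pw ω (k + 1) g * qv ϱ.2 (act g x))
            ≤ ∑ k ∈ Finset.range (n + 1), qv ϱ.2 x :=
              Finset.sum_le_sum fun k _ => ((hp k).2.2 ϱ hϱ x hx).2
          _ = (n + 1 : ℝ) * qv ϱ.2 x := by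
              rw [Finset.sum_const, Finset.card_range, nsmul_eq_mul]
              push_cast
              ring
      rw [div_le_iff₀ hpos]
      linarith

end S14
namespace S14

set_option linter.unusedSectionVars false
set_option maxHeartbeats 1000000

open Filter Topology

variable {D : Type} [Fintype D] [DecidableEq D]

/-! ### Mass on the bijective operations -/

noncomputable def bset (D : Type) [Fintype D] [DecidableEq D] : Finset (Op D 1) :=
  Finset.univ.filter fun g => Function.Bijective (unaryFun g)

noncomputable def massB (μ : Op D 1 → ℝ) : ℝ := ∑ g ∈ bset D, μ g

lemma mem_bset_iff {g : Op D 1} : g ∈ bset D ↔ Function.Bijective (unaryFun g) := by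
  simp [bset]

lemma idop_mem_bset : idop D ∈ bset D :=
  mem_bset_iff.2 (by rw [uf_idop]; exact Function.bijective_id)

lemma bij_comp_iff {f g : D → D} :
    Function.Bijective (f ∘ g) ↔ Function.Bijective f ∧ Function.Bijective g := by
  constructor
  · intro h
    exact ⟨Finite.surjective_iff_bijective.1 (Function.Surjective.of_comp h.surjective),
      Finite.injective_iff_bijective.1 (Function.Injective.of_comp h.injective)⟩
  · rintro ⟨hf, hg⟩
    exact hf.comp hg

lemma cmp_mem_bset_iff {u v : Op D 1} :
    cmp u v ∈ bset D ↔ u ∈ bset D ∧ v ∈ bset D := by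
  simp only [mem_bset_iff, uf_cmp]
  exact bij_comp_iff

lemma massB_cnv (α β : Op D 1 → ℝ) : massB (cnv α β) = massB α * massB β := by
  unfold massB cnv
  rw [Finset.sum_comm]
  have h : ∀ p : Op D 1 × Op D 1,
      (∑ g ∈ bset D, if cmp p.1 p.2 = g then α p.1 * β p.2 else 0)
      = if p ∈ (bset D) ×ˢ (bset D) then α p.1 * β p.2 else 0 := by
    intro p
    rw [Finset.sum_ite_eq]
    simp only [cmp_mem_bset_iff, Finset.mem_product]
  rw [Finset.sum_congr rfl fun p _ => h p, Finset.sum_ite_mem, Finset.univ_inter,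
    Finset.sum_product]
  symm
  rw [Finset.sum_mul]
  exact Finset.sum_congr rfl fun u _ => by rw [Finset.mul_sum]

lemma massB_dl_idop : massB (dl (idop D)) = 1 := by
  unfold massB dl
  rw [Finset.sum_ite_eq' (bset D) (idop D) (fun _ => (1 : ℝ))]
  rw [if_pos idop_mem_bset]

lemma massB_pw (ω : Op D 1 → ℝ) : ∀ n, massB (pw ω n) = (massB ω) ^ n
  | 0 => by rw [pow_zero]; exact massB_dl_idop
  | n + 1 => by
      show massB (cnv ω (pw ω n)) = massB ω ^ (n + 1)
      rw [massB_cnv, massB_pw ω n, pow_succ]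
      ring

lemma massB_ces (ω : Op D 1 → ℝ) (n : ℕ) :
    massB (ces ω n) = (∑ k ∈ Finset.range (n + 1), (massB ω) ^ (k + 1)) / (n + 1 : ℝ) := by
  unfold massB
  have hpt : ∀ g : Op D 1, ces ω n g
      = (∑ k ∈ Finset.range (n + 1), pw ω (k + 1) g) / (n + 1 : ℝ) := fun g => rfl
  rw [Finset.sum_congr rfl fun g _ => hpt g, ← Finset.sum_div, Finset.sum_comm]
  congr 1
  exact Finset.sum_congr rfl fun k _ => massB_pw ω (k + 1)

lemma offB_zero {μ : Op D 1 → ℝ} (h0 : ∀ g, 0 ≤ μ g) (h1 : (∑ g : Op D 1, μ g) = 1)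
    (hm : massB μ = 1) : ∀ g, 0 < μ g → Function.Bijective (unaryFun g) := by
  intro g hg
  by_contra hnb
  have hgmem : g ∈ Finset.univ \ bset D :=
    Finset.mem_sdiff.2 ⟨Finset.mem_univ g, fun h => hnb (mem_bset_iff.1 h)⟩
  have hsum : (∑ x ∈ Finset.univ \ bset D, μ x) = 0 := by
    have hsplit : (∑ x ∈ Finset.univ \ bset D, μ x) + (∑ x ∈ bset D, μ x)
        = ∑ x : Op D 1, μ x := Finset.sum_sdiff (Finset.subset_univ (bset D))
    unfold massB at hm
    rw [h1, hm] at hsplit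
    linarith
  have hle : μ g ≤ 0 := by
    have h := Finset.single_le_sum (f := μ) (fun x _ => h0 x) hgmem
    rwa [hsum] at h
  exact absurd hg (not_lt.2 hle)

lemma coord_le_one {μ : Op D 1 → ℝ} (h0 : ∀ g, 0 ≤ μ g) (h1 : (∑ g : Op D 1, μ g) = 1)
    (g : Op D 1) : μ g ≤ 1 := by
  calc μ g ≤ ∑ g' : Op D 1, μ g' :=
        Finset.single_le_sum (fun g' _ => h0 g') (Finset.mem_univ g)
    _ = 1 := h1

/-! ### Topology: closedness and compactness of sets of UFPs -/

lemma continuous_coord_sum (c : Op D 1 → ℝ) :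
    Continuous fun μ : Op D 1 → ℝ => ∑ g : Op D 1, μ g * c g :=
  continuous_finset_sum _ fun g _ => (continuous_apply g).mul continuous_const

lemma continuous_massB : Continuous (massB : (Op D 1 → ℝ) → ℝ) :=
  continuous_finset_sum _ fun g _ => continuous_apply g

lemma isClosed_UFP (Δ : VLang D) : IsClosed {ω : Op D 1 → ℝ | UFP Δ ω} := by
  have hset : {ω : Op D 1 → ℝ | UFP Δ ω} =
      ((⋂ g : Op D 1, {ω : Op D 1 → ℝ | 0 ≤ ω g}) ∩
       ({ω : Op D 1 → ℝ | (∑ g : Op D 1, ω g) = 1} ∩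
        ⋂ (ϱ : Σ r : ℕ, CostF D r) (_ : ϱ ∈ Δ) (x : Fin ϱ.1 → D) (_ : ϱ.2 x ≠ ⊤),
          ({ω : Op D 1 → ℝ | ∀ g : Op D 1, ϱ.2 (act g x) = ⊤ → ω g ≤ 0} ∩
           {ω : Op D 1 → ℝ | (∑ g : Op D 1, ω g * qv ϱ.2 (act g x)) ≤ qv ϱ.2 x}))) := by
    ext ω
    constructor
    · rintro ⟨a, b, c⟩
      simp only [Set.mem_inter_iff, Set.mem_iInter, Set.mem_setOf_eq]
      exact ⟨a, b, fun ϱ hϱ x hx => c ϱ hϱ x hx⟩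
    · intro h
      simp only [Set.mem_inter_iff, Set.mem_iInter, Set.mem_setOf_eq] at h
      obtain ⟨a, b, c⟩ := h
      exact ⟨a, b, fun ϱ hϱ x hx => c ϱ hϱ x hx⟩
  rw [hset]
  refine IsClosed.inter
    (isClosed_iInter fun g => isClosed_le continuous_const (continuous_apply g))
    (IsClosed.inter ?_ ?_)
  · exact isClosed_eq (continuous_finset_sum _ fun g _ => continuous_apply g) continuous_const
  · refine isClosed_iInter fun ϱ => isClosed_iInter fun _ => isClosed_iInter fun x =>
      isClosed_iInter fun _ => IsClosed.inter ?_ ?_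
    · have hs : {ω : Op D 1 → ℝ | ∀ g : Op D 1, ϱ.2 (act g x) = ⊤ → ω g ≤ 0}
          = ⋂ (g : Op D 1) (_ : ϱ.2 (act g x) = ⊤), {ω : Op D 1 → ℝ | ω g ≤ 0} := by
        ext ω
        simp [Set.mem_iInter]
      rw [hs]
      exact isClosed_iInter fun g => isClosed_iInter fun _ =>
        isClosed_le (continuous_apply g) continuous_const
    · exact isClosed_le (continuous_coord_sum _) continuous_const

lemma isCompact_of_closed_sub {C : Set (Op D 1 → ℝ)} (hC : IsClosed C)
    (hsub : ∀ μ ∈ C, (∀ g, 0 ≤ μ g) ∧ (∑ g : Op D 1, μ g) = 1) : IsCompact C := by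
  have hbox : IsCompact (Set.pi Set.univ fun _ : Op D 1 => Set.Icc (0 : ℝ) 1) :=
    isCompact_univ_pi fun _ => isCompact_Icc
  refine IsCompact.of_isClosed_subset hbox hC ?_
  intro μ hμ
  obtain ⟨h0, h1⟩ := hsub μ hμ
  intro g _
  exact ⟨h0 g, coord_le_one h0 h1 g⟩

/-! ### The idempotent limit of Cesàro averages -/

lemma exists_tau {Δ : VLang D} {ω : Op D 1 → ℝ} (hω : UFP Δ ω) :
    ∃ τ : Op D 1 → ℝ, UFP Δ τ ∧ cnv ω τ = τ ∧ cnv τ τ = τ ∧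
      (massB ω = 1 → massB τ = 1) ∧ (massB ω < 1 → massB τ = 0) := by
  have hK : IsCompact {μ : Op D 1 → ℝ | UFP Δ μ} :=
    isCompact_of_closed_sub (isClosed_UFP Δ) (fun μ hμ => ⟨hμ.1, hμ.2.1⟩)
  have hmem : ∀ n, ces ω n ∈ {μ : Op D 1 → ℝ | UFP Δ μ} := fun n => UFP_ces hω n
  obtain ⟨τ, hτ, φ, hφ, hlim⟩ := hK.tendsto_subseq hmem
  have hcoord : ∀ g : Op D 1, Tendsto (fun n => ces ω (φ n) g) atTop (𝓝 (τ g)) := by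
    intro g
    have h := tendsto_pi_nhds.1 hlim g
    simpa [Function.comp] using h
  have hpw01 : ∀ (k : ℕ) (g : Op D 1), 0 ≤ pw ω k g ∧ pw ω k g ≤ 1 := by
    intro k g
    have h := UFP_pw hω k
    exact ⟨h.1 g, coord_le_one h.1 h.2.1 g⟩
  have hces_shift : ∀ (m : ℕ) (g : Op D 1), cnv ω (ces ω m) g
      = ces ω m g + (pw ω (m + 2) g - pw ω 1 g) / (m + 1 : ℝ) := by
    intro m g
    have hlin : cnv ω (ces ω m) g
        = (∑ k ∈ Finset.range (m + 1), pw ω (k + 2) g) / (m + 1 : ℝ) := by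
      have hpt : ∀ p : Op D 1 × Op D 1,
          (if cmp p.1 p.2 = g then ω p.1 * ces ω m p.2 else 0)
          = (∑ k ∈ Finset.range (m + 1),
              if cmp p.1 p.2 = g then ω p.1 * pw ω (k + 1) p.2 else 0) / (m + 1 : ℝ) := by
        intro p
        by_cases hc : cmp p.1 p.2 = g
        · rw [if_pos hc]
          simp only [ces]
          rw [← mul_div_assoc, Finset.mul_sum]
          congr 1
          exact Finset.sum_congr rfl fun k _ => (if_pos hc).symm
        · simp [hc]
      show (∑ p : Op D 1 × Op D 1, if cmp p.1 p.2 = g then ω p.1 * ces ω m p.2 else 0)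
          = (∑ k ∈ Finset.range (m + 1), pw ω (k + 2) g) / (m + 1 : ℝ)
      rw [Finset.sum_congr rfl fun p _ => hpt p, ← Finset.sum_div, Finset.sum_comm]
      congr 1
    have htel : (∑ k ∈ Finset.range (m + 1), pw ω (k + 2) g)
        = (∑ k ∈ Finset.range (m + 1), pw ω (k + 1) g) + pw ω (m + 2) g - pw ω 1 g := by
      have h1 := Finset.sum_range_succ (fun k => pw ω (k + 1) g) (m + 1)
      have h2 : (∑ i ∈ Finset.range (m + 1 + 1), pw ω (i + 1) g)
          = (∑ i ∈ Finset.range (m + 1), pw ω (i + 2) g) + pw ω 1 g :=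
        Finset.sum_range_succ' (fun k => pw ω (k + 1) g) (m + 1)
      rw [h1] at h2
      linarith
    rw [hlin, htel]
    have hm1 : (0 : ℝ) < (m : ℝ) + 1 := by positivity
    show ((∑ k ∈ Finset.range (m + 1), pw ω (k + 1) g) + pw ω (m + 2) g - pw ω 1 g) / ((m : ℝ) + 1)
        = (∑ k ∈ Finset.range (m + 1), pw ω (k + 1) g) / ((m : ℝ) + 1)
          + (pw ω (m + 2) g - pw ω 1 g) / ((m : ℝ) + 1)
    ring
  have hφn : ∀ n : ℕ, ((n : ℝ) + 1) ≤ ((φ n : ℕ) : ℝ) + 1 := by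
    intro n
    have h : n ≤ φ n := hφ.le_apply
    have h' : ((n : ℕ) : ℝ) ≤ ((φ n : ℕ) : ℝ) := by exact_mod_cast h
    linarith
  have herr : ∀ g : Op D 1,
      Tendsto (fun n => (pw ω (φ n + 2) g - pw ω 1 g) / ((φ n : ℕ) + 1 : ℝ)) atTop (𝓝 0) := by
    intro g
    have hgl : Tendsto (fun n : ℕ => 2 / ((n : ℝ) + 1)) atTop (𝓝 0) := by
      have h := (tendsto_const_div_atTop_nhds_zero_nat (2 : ℝ)).comp (tendsto_add_atTop_nat 1)
      simpa [Function.comp_def, Nat.cast_add, Nat.cast_one] using h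
    refine squeeze_zero_norm (fun n => ?_) hgl
    have h1 := hpw01 (φ n + 2) g
    have h2 := hpw01 1 g
    have hpos : (0 : ℝ) < ((φ n : ℕ) : ℝ) + 1 := by positivity
    rw [Real.norm_eq_abs, abs_div, abs_of_pos hpos]
    have hnum : |pw ω (φ n + 2) g - pw ω 1 g| ≤ 2 := by
      rw [abs_le]
      constructor <;> linarith [h1.1, h1.2, h2.1, h2.2]
    calc |pw ω (φ n + 2) g - pw ω 1 g| / (((φ n : ℕ) : ℝ) + 1)
        ≤ 2 / (((φ n : ℕ) : ℝ) + 1) :=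
          div_le_div_of_nonneg_right hnum (le_of_lt hpos)
      _ ≤ 2 / ((n : ℝ) + 1) :=
          div_le_div_of_nonneg_left (by norm_num) (by positivity) (hφn n)
  have habs : cnv ω τ = τ := by
    funext g
    have hc : Continuous fun μ : Op D 1 → ℝ => cnv ω μ g := by
      unfold cnv
      refine continuous_finset_sum _ fun p _ => ?_
      by_cases h : cmp p.1 p.2 = g
      · simpa [h] using (by fun_prop : Continuous fun μ : Op D 1 → ℝ => ω p.1 * μ p.2)
      · simpa [h] using (continuous_const : Continuous fun _ : Op D 1 → ℝ => (0 : ℝ))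
    have t1 : Tendsto (fun n => cnv ω (ces ω (φ n)) g) atTop (𝓝 (cnv ω τ g)) := by
      have h := (hc.tendsto τ).comp hlim
      simpa [Function.comp_def] using h
    have t2 : Tendsto (fun n => cnv ω (ces ω (φ n)) g) atTop (𝓝 (τ g)) := by
      have heq : (fun n => cnv ω (ces ω (φ n)) g)
          = fun n => ces ω (φ n) g + (pw ω (φ n + 2) g - pw ω 1 g) / ((φ n : ℕ) + 1 : ℝ) :=
        funext fun n => hces_shift (φ n) g
      rw [heq]
      simpa using (hcoord g).add (herr g)
    exact tendsto_nhds_unique t1 t2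
  have hidem : cnv τ τ = τ := by
    funext g
    have hcL : Continuous fun μ : Op D 1 → ℝ => cnv μ τ g := by
      unfold cnv
      refine continuous_finset_sum _ fun p _ => ?_
      by_cases h : cmp p.1 p.2 = g
      · simpa [h] using (by fun_prop : Continuous fun μ : Op D 1 → ℝ => μ p.1 * τ p.2)
      · simpa [h] using (continuous_const : Continuous fun _ : Op D 1 → ℝ => (0 : ℝ))
    have t1 : Tendsto (fun n => cnv (ces ω (φ n)) τ g) atTop (𝓝 (cnv τ τ g)) := by
      have h := (hcL.tendsto τ).comp hlim
      simpa [Function.comp_def] using h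
    have hfix : ∀ j, cnv (pw ω (j + 1)) τ = τ := by
      intro j
      induction j with
      | zero =>
        have h1 : pw ω 1 = ω := by
          show cnv ω (pw ω 0) = ω
          rw [show pw ω 0 = dl (idop D) from rfl, cnv_dl_right]
        rw [h1, habs]
      | succ j ih =>
        show cnv (cnv ω (pw ω (j + 1))) τ = τ
        rw [cnv_assoc, ih, habs]
    have hfix2 : ∀ m, cnv (ces ω m) τ g = τ g := by
      intro m
      have hpt : ∀ p : Op D 1 × Op D 1,
          (if cmp p.1 p.2 = g then ces ω m p.1 * τ p.2 else 0)
          = (∑ k ∈ Finset.range (m + 1),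
              if cmp p.1 p.2 = g then pw ω (k + 1) p.1 * τ p.2 else 0) / (m + 1 : ℝ) := by
        intro p
        by_cases hc : cmp p.1 p.2 = g
        · rw [if_pos hc]
          simp only [ces]
          rw [div_mul_eq_mul_div, Finset.sum_mul]
          congr 1
          exact Finset.sum_congr rfl fun k _ => (if_pos hc).symm
        · simp [hc]
      show (∑ p : Op D 1 × Op D 1, if cmp p.1 p.2 = g then ces ω m p.1 * τ p.2 else 0) = τ g
      rw [Finset.sum_congr rfl fun p _ => hpt p, ← Finset.sum_div, Finset.sum_comm]
      have hterm : ∀ k ∈ Finset.range (m + 1),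
          (∑ p : Op D 1 × Op D 1, if cmp p.1 p.2 = g then pw ω (k + 1) p.1 * τ p.2 else 0)
            = τ g := fun k _ => congrFun (hfix k) g
      rw [Finset.sum_congr rfl hterm, Finset.sum_const, Finset.card_range, nsmul_eq_mul]
      push_cast
      rw [mul_comm, mul_div_assoc, div_self (by positivity : ((m : ℝ) + 1) ≠ 0), mul_one]
    have t2 : Tendsto (fun n => cnv (ces ω (φ n)) τ g) atTop (𝓝 (τ g)) := by
      simp only [hfix2]
      exact tendsto_const_nhds
    exact tendsto_nhds_unique t1 t2
  have hmB : Tendsto (fun n => massB (ces ω (φ n))) atTop (𝓝 (massB τ)) := by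
    have h := (continuous_massB.tendsto τ).comp hlim
    simpa [Function.comp_def] using h
  refine ⟨τ, hτ, habs, hidem, ?_, ?_⟩
  · intro h1
    have hone : ∀ n, massB (ces ω (φ n)) = 1 := by
      intro n
      rw [massB_ces, h1]
      simp only [one_pow, Finset.sum_const, Finset.card_range, nsmul_eq_mul, mul_one]
      push_cast
      rw [div_self (by positivity : ((φ n : ℕ) : ℝ) + 1 ≠ 0)]
    refine tendsto_nhds_unique hmB ?_
    simp only [hone]
    exact tendsto_const_nhds
  · intro hlt
    have h0r : 0 ≤ massB ω := Finset.sum_nonneg fun g _ => hω.1 g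
    set r := massB ω with hrdef
    have hgeom : ∀ N : ℕ, (∑ k ∈ Finset.range N, r ^ (k + 1)) ≤ 1 / (1 - r) := by
      intro N
      have hs1 : (∑ k ∈ Finset.range N, r ^ (k + 1)) ≤ ∑ k ∈ Finset.range N, r ^ k :=
        Finset.sum_le_sum fun k _ =>
          pow_le_pow_of_le_one h0r (le_of_lt hlt) (Nat.le_succ k)
      have hs2 : (∑ k ∈ Finset.range N, r ^ k) = (r ^ N - 1) / (r - 1) :=
        geom_sum_eq (ne_of_lt hlt) N
      have hs3 : (r ^ N - 1) / (r - 1) = (1 - r ^ N) / (1 - r) := by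
        rw [← neg_sub (1 : ℝ) (r ^ N), ← neg_sub (1 : ℝ) r, neg_div_neg_eq]
      have hs4 : (1 - r ^ N) / (1 - r) ≤ 1 / (1 - r) := by
        gcongr
        have : 0 ≤ r ^ N := pow_nonneg h0r N
        linarith
      calc (∑ k ∈ Finset.range N, r ^ (k + 1)) ≤ ∑ k ∈ Finset.range N, r ^ k := hs1
        _ = (r ^ N - 1) / (r - 1) := hs2
        _ = (1 - r ^ N) / (1 - r) := hs3
        _ ≤ 1 / (1 - r) := hs4
    have hnn : ∀ n, 0 ≤ massB (ces ω (φ n)) := fun n =>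
      Finset.sum_nonneg fun g _ => (UFP_ces hω (φ n)).1 g
    have hb : ∀ n : ℕ, massB (ces ω (φ n)) ≤ (1 / (1 - r)) / ((n : ℝ) + 1) := by
      intro n
      rw [massB_ces]
      have hd1 : (0 : ℝ) < ((φ n : ℕ) : ℝ) + 1 := by positivity
      have hd2 : (0 : ℝ) < (n : ℝ) + 1 := by positivity
      have hcnn : (0 : ℝ) ≤ 1 / (1 - r) := div_nonneg zero_le_one (by linarith)
      calc (∑ k ∈ Finset.range (φ n + 1), r ^ (k + 1)) / ((φ n : ℕ) + 1 : ℝ)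
          ≤ (1 / (1 - r)) / (((φ n : ℕ) : ℝ) + 1) :=
            div_le_div_of_nonneg_right (hgeom (φ n + 1)) (le_of_lt hd1)
        _ ≤ (1 / (1 - r)) / ((n : ℝ) + 1) :=
            div_le_div_of_nonneg_left hcnn hd2 (hφn n)
    have hgl : Tendsto (fun n : ℕ => (1 / (1 - r)) / ((n : ℝ) + 1)) atTop (𝓝 0) := by
      have h := (tendsto_const_div_atTop_nhds_zero_nat (1 / (1 - r))).comp
        (tendsto_add_atTop_nat 1)
      simpa [Function.comp_def, Nat.cast_add, Nat.cast_one] using h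
    exact tendsto_nhds_unique hmB (squeeze_zero hnn hb hgl)

end S14
namespace S14

set_option linter.unusedSectionVars false
set_option maxHeartbeats 1000000

variable {D : Type} [Fintype D] [DecidableEq D]

/-! ### Powers of a unary operation -/

def cpow (a : Op D 1) : ℕ → Op D 1
  | 0 => idop D
  | n + 1 => cmp a (cpow a n)

lemma uf_cpow (a : Op D 1) : ∀ n, unaryFun (cpow a n) = (unaryFun a)^[n]
  | 0 => rfl
  | n + 1 => by
      show unaryFun (cmp a (cpow a n)) = (unaryFun a)^[n + 1]
      rw [uf_cmp, uf_cpow a n, Function.iterate_succ']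

lemma cpow_one (a : Op D 1) : cpow a 1 = a := by
  show cmp a (idop D) = a
  exact cmp_idop_right a

lemma exists_cpow_idop (a : Op D 1) (ha : Function.Bijective (unaryFun a)) :
    ∃ n, 1 ≤ n ∧ cpow a n = idop D := by
  set e : Equiv.Perm D := Equiv.ofBijective _ ha with he
  refine ⟨orderOf e, orderOf_pos e, ?_⟩
  apply uf_inj
  rw [uf_cpow, uf_idop]
  have h1 : ⇑(e ^ orderOf e) = (⇑e)^[orderOf e] := by
    ext d
    rw [Equiv.Perm.coe_pow]
  have h2 : ⇑e = unaryFun a := rfl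
  have h3 := pow_orderOf_eq_one e
  rw [← h2, ← h1, h3]
  rfl

/-! ### The support of an idempotent distribution supported on bijections is a
group, on which the distribution is uniform. -/

lemma supp_group (τ : Op D 1 → ℝ) (hτ0 : ∀ g, 0 ≤ τ g) (hτ1 : (∑ g : Op D 1, τ g) = 1)
    (hidem : cnv τ τ = τ) (hbij : ∀ g, 0 < τ g → Function.Bijective (unaryFun g)) :
    0 < τ (idop D) ∧
      (∀ g, 0 < τ g →
        τ g = 1 / ((Finset.univ.filter fun h : Op D 1 => 0 < τ h).card : ℝ)) := by
  classical
  set A : Finset (Op D 1) := Finset.univ.filter fun h : Op D 1 => 0 < τ h with hA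
  have hmemA : ∀ {g : Op D 1}, g ∈ A ↔ 0 < τ g := by
    intro g
    simp [hA]
  have hAne : A.Nonempty := by
    by_contra hemp
    rw [Finset.not_nonempty_iff_eq_empty] at hemp
    have hz : ∀ g : Op D 1, τ g = 0 := by
      intro g
      by_contra hne
      have hgA : g ∈ A := hmemA.2 (lt_of_le_of_ne (hτ0 g) (Ne.symm hne))
      rw [hemp] at hgA
      exact absurd hgA (Finset.notMem_empty g)
    rw [Finset.sum_congr rfl fun g _ => hz g, Finset.sum_const, smul_zero] at hτ1
    norm_num at hτ1
  have hmul : ∀ u ∈ A, ∀ v ∈ A, cmp u v ∈ A := by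
    intro u hu v hv
    refine hmemA.2 ?_
    have h := cnv_single_le hτ0 hτ0 u v
    rw [hidem] at h
    exact lt_of_lt_of_le (mul_pos (hmemA.1 hu) (hmemA.1 hv)) h
  have hcpow_mem : ∀ a ∈ A, ∀ n, cpow a (n + 1) ∈ A := by
    intro a ha n
    induction n with
    | zero =>
      show cmp a (idop D) ∈ A
      rw [cmp_idop_right]
      exact ha
    | succ n ih =>
      show cmp a (cpow a (n + 1)) ∈ A
      exact hmul a ha _ ih
  have hid : idop D ∈ A := by
    obtain ⟨a, ha⟩ := hAne
    obtain ⟨n, hn1, hn2⟩ := exists_cpow_idop a (hbij a (hmemA.1 ha))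
    obtain ⟨m, rfl⟩ : ∃ m, n = m + 1 := ⟨n - 1, by omega⟩
    rw [← hn2]
    exact hcpow_mem a ha m
  have hinv : ∀ a ∈ A, ∃ b ∈ A, cmp a b = idop D := by
    intro a ha
    obtain ⟨n, hn1, hn2⟩ := exists_cpow_idop a (hbij a (hmemA.1 ha))
    refine ⟨cpow a (n - 1), ?_, ?_⟩
    · rcases Nat.lt_or_ge 1 n with h | h
      · obtain ⟨m, hm⟩ : ∃ m, n - 1 = m + 1 := ⟨n - 2, by omega⟩
        rw [hm]
        exact hcpow_mem a ha m
      · have h0 : n - 1 = 0 := by omega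
        rw [h0]
        exact hid
    · have hn : n - 1 + 1 = n := by omega
      have hc : cmp a (cpow a (n - 1)) = cpow a n := by
        conv_rhs => rw [← hn]
        rfl
      rw [hc, hn2]

  have hsumA : (∑ g ∈ A, τ g) = 1 := by
    rw [← hτ1]
    apply Finset.sum_subset (Finset.subset_univ A)
    intro g _ hg
    have h0 : ¬ 0 < τ g := fun h => hg (hmemA.2 h)
    linarith [hτ0 g, not_lt.1 h0]
  obtain ⟨x₀, hx₀A, hmin⟩ := Finset.exists_min_image A τ hAne
  have hinv' : ∀ u : Op D 1, ∃ b : Op D 1, u ∈ A → (b ∈ A ∧ cmp u b = idop D) := by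
    intro u
    by_cases hu : u ∈ A
    · obtain ⟨b, hb1, hb2⟩ := hinv u hu
      exact ⟨b, fun _ => ⟨hb1, hb2⟩⟩
    · exact ⟨idop D, fun h => absurd h hu⟩
  choose binv hbinv using hinv'
  set vmap : Op D 1 → Op D 1 := fun u => cmp (binv u) x₀ with hvmap
  have hvA : ∀ u ∈ A, vmap u ∈ A := fun u hu => hmul _ (hbinv u hu).1 _ hx₀A
  have hcv : ∀ u ∈ A, cmp u (vmap u) = x₀ := by
    intro u hu
    show cmp u (cmp (binv u) x₀) = x₀
    rw [← cmp_assoc, (hbinv u hu).2, cmp_idop_left]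
  have hvinj : ∀ u ∈ A, ∀ u' ∈ A, vmap u = vmap u' → u = u' := by
    intro u hu u' hu' he
    have h1 : cmp u (vmap u) = cmp u' (vmap u) := by
      rw [hcv u hu, he, hcv u' hu']
    have hb : Function.Bijective (unaryFun (vmap u)) := hbij _ (hmemA.1 (hvA u hu))
    apply uf_inj
    funext d
    obtain ⟨t, ht⟩ := hb.surjective d
    have h2 := congrFun (congrArg unaryFun h1) t
    simp only [uf_cmp, Function.comp_apply] at h2
    rw [ht] at h2
    exact h2
  have himg : A.image vmap = A := by
    apply Finset.eq_of_subset_of_card_le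
    · intro y hy
      obtain ⟨u, hu, rfl⟩ := Finset.mem_image.1 hy
      exact hvA u hu
    · rw [Finset.card_image_of_injOn fun u hu u' hu' => hvinj u hu u' hu']
  have hconst : ∀ y ∈ A, τ y = τ x₀ := by
    by_contra hc
    push_neg at hc
    obtain ⟨y₁, hy₁A, hy₁⟩ := hc
    have hy₁' : τ x₀ < τ y₁ := lt_of_le_of_ne (hmin y₁ hy₁A) (Ne.symm hy₁)
    obtain ⟨u₁, hu₁A, hu₁⟩ : ∃ u₁ ∈ A, vmap u₁ = y₁ := by
      have hmem : y₁ ∈ A.image vmap := by rw [himg]; exact hy₁A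
      exact Finset.mem_image.1 hmem
    have hlow : (∑ u ∈ A, τ u * τ (vmap u)) ≤ τ x₀ := by
      have h1 : (∑ u ∈ A, τ u * τ (vmap u))
          = ∑ p ∈ A.image (fun u => (u, vmap u)),
              (if cmp p.1 p.2 = x₀ then τ p.1 * τ p.2 else 0) := by
        rw [Finset.sum_image (fun u _ u' _ h => congrArg Prod.fst h)]
        refine Finset.sum_congr rfl fun u hu => ?_
        rw [if_pos (hcv u hu)]
      have h2 : (∑ p ∈ A.image (fun u => (u, vmap u)),
          (if cmp p.1 p.2 = x₀ then τ p.1 * τ p.2 else 0))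
          ≤ ∑ p : Op D 1 × Op D 1, (if cmp p.1 p.2 = x₀ then τ p.1 * τ p.2 else 0) := by
        apply Finset.sum_le_sum_of_subset_of_nonneg (Finset.subset_univ _)
        intro p _ _
        split
        · exact mul_nonneg (hτ0 _) (hτ0 _)
        · exact le_rfl
      have h3 : (∑ p : Op D 1 × Op D 1, (if cmp p.1 p.2 = x₀ then τ p.1 * τ p.2 else 0))
          = τ x₀ := congrFun hidem x₀
      rw [h1]
      exact le_of_le_of_eq h2 h3
    have hstrict : (∑ u ∈ A, τ u * τ x₀) < ∑ u ∈ A, τ u * τ (vmap u) := by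
      apply Finset.sum_lt_sum
      · intro u hu
        exact mul_le_mul_of_nonneg_left (hmin (vmap u) (hvA u hu)) (hτ0 u)
      · refine ⟨u₁, hu₁A, ?_⟩
        rw [hu₁]
        exact mul_lt_mul_of_pos_left hy₁' (hmemA.1 hu₁A)
    have hls : (∑ u ∈ A, τ u * τ x₀) = τ x₀ := by
      rw [← Finset.sum_mul, hsumA, one_mul]
    linarith
  have hcard : ((A.card : ℝ)) * τ x₀ = 1 := by
    rw [← hsumA, Finset.sum_congr rfl hconst, Finset.sum_const, nsmul_eq_mul]
  have hcardpos : 0 < (A.card : ℝ) := by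
    have := Finset.card_pos.2 hAne
    exact_mod_cast this
  have hval : τ x₀ = 1 / (A.card : ℝ) := by
    field_simp
    linarith [hcard]
  refine ⟨hmemA.1 hid, ?_⟩
  intro g hg
  rw [hconst g (hmemA.2 hg), hval]

end S14
namespace S14

set_option linter.unusedSectionVars false
set_option maxHeartbeats 1000000

open Filter Topology

variable {D : Type} [Fintype D] [DecidableEq D]

/-- Compactness: a property achievable by a UFP of every finite sublanguage is
achievable by a UFP of the whole language. -/
lemma exists_global (Γ : VLang D) (P : (Op D 1 → ℝ) → Prop)
    (hcl : IsClosed {μ : Op D 1 → ℝ | P μ})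
    (hne : ∀ S : VLang D, S ⊆ Γ → S.Finite → ∃ μ, UFP S μ ∧ P μ) :
    ∃ μ, UFP Γ μ ∧ P μ := by
  classical
  haveI : Nonempty {S : VLang D // S ⊆ Γ ∧ S.Finite} :=
    ⟨⟨∅, Set.empty_subset Γ, Set.finite_empty⟩⟩
  set t : {S : VLang D // S ⊆ Γ ∧ S.Finite} → Set (Op D 1 → ℝ) :=
    fun S => {μ | UFP S.1 μ ∧ P μ} with ht
  have htd : Directed (· ⊇ ·) t := by
    intro S S'
    refine ⟨⟨S.1 ∪ S'.1, Set.union_subset S.2.1 S'.2.1, S.2.2.union S'.2.2⟩, ?_, ?_⟩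
    · rintro μ ⟨h1, h2⟩
      exact ⟨UFP_anti Set.subset_union_left h1, h2⟩
    · rintro μ ⟨h1, h2⟩
      exact ⟨UFP_anti Set.subset_union_right h1, h2⟩
  have htn : ∀ S, (t S).Nonempty := fun S => hne S.1 S.2.1 S.2.2
  have htcl : ∀ S, IsClosed (t S) := fun S => (isClosed_UFP S.1).inter hcl
  have htc : ∀ S, IsCompact (t S) := fun S =>
    isCompact_of_closed_sub (htcl S) (fun μ hμ => ⟨hμ.1.1, hμ.1.2.1⟩)
  obtain ⟨μ, hμ⟩ :=
    IsCompact.nonempty_iInter_of_directed_nonempty_isCompact_isClosed t htd htn htc htcl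
  simp only [Set.mem_iInter] at hμ
  have hμ0 := hμ ⟨∅, Set.empty_subset Γ, Set.finite_empty⟩
  refine ⟨μ, ⟨hμ0.1.1, hμ0.1.2.1, ?_⟩, hμ0.2⟩
  intro ϱ hϱ x hx
  have h := hμ ⟨{ϱ}, Set.singleton_subset_iff.2 hϱ, Set.finite_singleton ϱ⟩
  exact h.1.2.2 ϱ (Set.mem_singleton ϱ) x hx

lemma crux_nonbij (Γ : VLang D)
    (hcore : ∀ f ∈ fPolPlus Γ 1, Function.Bijective (unaryFun f))
    {f : Op D 1} (hnb : ¬ Function.Bijective (unaryFun f))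
    (hf : ∀ S : VLang D, S ⊆ Γ → S.Finite → f ∈ fPolPlus S 1) : False := by
  have hnp : ¬ IsProj f := by
    intro hp
    rw [isProj_unary hp, uf_idop] at hnb
    exact hnb Function.bijective_id
  have hglob : ∃ μ, UFP Γ μ ∧ massB μ ≤ 0 := by
    apply exists_global Γ (fun μ => massB μ ≤ 0)
      (isClosed_le continuous_massB continuous_const)
    intro S hS hfin
    obtain ⟨ω, hω, hωf⟩ := exists_UFP_of_mem (hf S hS hfin) hnp
    have hωm : UFP S (mix ω) := UFP_mix hω
    have hfid : f ≠ idop D := by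
      intro he
      rw [he, uf_idop] at hnb
      exact hnb Function.bijective_id
    have hmf : 0 < mix ω f := by
      have hd : dl (idop D) f = 0 := by
        unfold dl
        rw [if_neg hfid]
      show 0 < (ω f + dl (idop D) f) / 2
      rw [hd]
      linarith
    have hml : massB (mix ω) < 1 := by
      have hfB : f ∉ bset D := fun h => hnb (mem_bset_iff.1 h)
      have hsub : bset D ⊆ Finset.univ.erase f := by
        intro g hg
        refine Finset.mem_erase.2 ⟨?_, Finset.mem_univ g⟩
        rintro rfl
        exact hfB hg
      have h1 : massB (mix ω) ≤ ∑ g ∈ Finset.univ.erase f, mix ω g :=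
        Finset.sum_le_sum_of_subset_of_nonneg hsub (fun g _ _ => hωm.1 g)
      have h2 : (∑ g ∈ Finset.univ.erase f, mix ω g) = 1 - mix ω f := by
        have h3 : mix ω f + ∑ g ∈ Finset.univ.erase f, mix ω g = ∑ g : Op D 1, mix ω g :=
          Finset.add_sum_erase Finset.univ (mix ω) (Finset.mem_univ f)
        rw [hωm.2.1] at h3
        linarith
      rw [h2] at h1
      linarith
    obtain ⟨τ, hτ, _, _, _, hm0⟩ := exists_tau hωm
    exact ⟨τ, hτ, le_of_eq (hm0 hml)⟩
  obtain ⟨μ, hμ, hm⟩ := hglob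
  have hm0 : massB μ = 0 := le_antisymm hm (Finset.sum_nonneg fun g _ => hμ.1 g)
  have hsd : (∑ g ∈ Finset.univ \ bset D, μ g) = 1 := by
    have hsplit : (∑ g ∈ Finset.univ \ bset D, μ g) + (∑ g ∈ bset D, μ g)
        = ∑ g : Op D 1, μ g := Finset.sum_sdiff (Finset.subset_univ (bset D))
    unfold massB at hm0
    rw [hμ.2.1, hm0] at hsplit
    linarith
  obtain ⟨g, hgmem, hgpos⟩ : ∃ g ∈ Finset.univ \ bset D, 0 < μ g := by
    by_contra hc
    push_neg at hc
    have hle : (∑ g ∈ Finset.univ \ bset D, μ g) ≤ 0 :=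
      Finset.sum_nonpos fun g hg => hc g hg
    linarith
  have hgf : g ∈ fPolPlus Γ 1 := mem_fPolPlus_of_UFP hμ hgpos
  have hgb := hcore g hgf
  rw [Finset.mem_sdiff] at hgmem
  exact hgmem.2 (mem_bset_iff.2 hgb)

lemma claimA (Γ : VLang D)
    (hcore : ∀ f ∈ fPolPlus Γ 1, Function.Bijective (unaryFun f)) :
    ∃ SA : VLang D, SA ⊆ Γ ∧ SA.Finite ∧
      ∀ g ∈ fPolPlus SA 1, Function.Bijective (unaryFun g) := by
  classical
  by_contra hc
  push_neg at hc
  have hch : ∀ g : Op D 1, ∃ S : VLang D, S ⊆ Γ ∧ S.Finite ∧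
      (¬ Function.Bijective (unaryFun g) → g ∉ fPolPlus S 1) := by
    intro g
    by_cases hb : Function.Bijective (unaryFun g)
    · exact ⟨∅, Set.empty_subset _, Set.finite_empty, fun h => absurd hb h⟩
    · by_cases hall : ∀ S : VLang D, S ⊆ Γ → S.Finite → g ∈ fPolPlus S 1
      · exact (crux_nonbij Γ hcore hb hall).elim
      · push_neg at hall
        obtain ⟨S, h1, h2, h3⟩ := hall
        exact ⟨S, h1, h2, fun _ => h3⟩
  choose Sg hSg1 hSg2 hSg3 using hch
  obtain ⟨g, hg1, hg2⟩ := hc (⋃ g : Op D 1, Sg g) (Set.iUnion_subset hSg1)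
    (Set.finite_iUnion hSg2)
  exact hSg3 g hg2 (fPolPlus_antitone (Set.subset_iUnion Sg g) hg1)

lemma crux (Γ : VLang D)
    (hcore : ∀ f ∈ fPolPlus Γ 1, Function.Bijective (unaryFun f))
    {f : Op D 1}
    (hf : ∀ S : VLang D, S ⊆ Γ → S.Finite → f ∈ fPolPlus S 1) : f ∈ fPolPlus Γ 1 := by
  classical
  by_cases hp : IsProj f
  · exact Or.inl hp
  by_cases hb : Function.Bijective (unaryFun f)
  case neg => exact (crux_nonbij Γ hcore hb hf).elim
  obtain ⟨SA, hSA1, hSA2, hSAb⟩ := claimA Γ hcore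
  haveI : Nonempty (Op D 1) := ⟨idop D⟩
  have hMcpos : (0 : ℝ) < (Fintype.card (Op D 1) : ℝ) := by
    have h := Fintype.card_pos (α := Op D 1)
    exact_mod_cast h
  have hglob : ∃ μ, UFP Γ μ ∧ 1 / (Fintype.card (Op D 1) : ℝ) ≤ μ f := by
    apply exists_global Γ (fun μ => 1 / (Fintype.card (Op D 1) : ℝ) ≤ μ f)
      (isClosed_le continuous_const (continuous_apply f))
    intro S hS hfin
    obtain ⟨ω, hω, hωf⟩ := exists_UFP_of_mem
      (hf (S ∪ SA) (Set.union_subset hS hSA1) (hfin.union hSA2)) hp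
    have hωm : UFP (S ∪ SA) (mix ω) := UFP_mix hω
    have hsupp : ∀ g, 0 < mix ω g → g ∈ bset D := by
      intro g hg
      by_cases hgi : g = idop D
      · rw [hgi]
        exact idop_mem_bset
      · have hωg : 0 < ω g := by
          have hd : dl (idop D) g = 0 := by
            unfold dl
            rw [if_neg hgi]
          have : (ω g + dl (idop D) g) / 2 > 0 := hg
          rw [hd] at this
          linarith
        have hgmem : g ∈ fPolPlus (S ∪ SA) 1 := mem_fPolPlus_of_UFP hω hωg
        exact mem_bset_iff.2
          (hSAb g (fPolPlus_antitone Set.subset_union_right hgmem))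
    have hmass1 : massB (mix ω) = 1 := by
      have hz : (∑ g ∈ Finset.univ \ bset D, mix ω g) = 0 := by
        apply Finset.sum_eq_zero
        intro g hg
        rw [Finset.mem_sdiff] at hg
        by_contra hne
        have hpos : 0 < mix ω g := lt_of_le_of_ne (hωm.1 g) (Ne.symm hne)
        exact hg.2 (hsupp g hpos)
      have hsplit : (∑ g ∈ Finset.univ \ bset D, mix ω g) + (∑ g ∈ bset D, mix ω g)
          = ∑ g : Op D 1, mix ω g := Finset.sum_sdiff (Finset.subset_univ (bset D))
      unfold massB
      rw [hz, hωm.2.1] at hsplit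
      linarith
    obtain ⟨τ, hτU, habs, hidem, hm1, _⟩ := exists_tau hωm
    have hmτ : massB τ = 1 := hm1 hmass1
    have hτbij := offB_zero hτU.1 hτU.2.1 hmτ
    obtain ⟨hidA, huni⟩ := supp_group τ hτU.1 hτU.2.1 hidem hτbij
    have hmixf : 0 < mix ω f := by
      have h1 : 0 ≤ dl (idop D) f := dl_nonneg _ _
      show 0 < (ω f + dl (idop D) f) / 2
      linarith
    have hτf : 0 < τ f := by
      have h1 : mix ω f * τ (idop D) ≤ cnv (mix ω) τ (cmp f (idop D)) :=
        cnv_single_le hωm.1 hτU.1 f (idop D)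
      rw [cmp_idop_right, habs] at h1
      exact lt_of_lt_of_le (mul_pos hmixf hidA) h1
    refine ⟨τ, UFP_anti Set.subset_union_left hτU, ?_⟩
    rw [huni f hτf]
    apply div_le_div_of_nonneg_left zero_le_one ?_ ?_
    · have hfA : f ∈ Finset.univ.filter fun h : Op D 1 => 0 < τ h := by
        simp [hτf]
      have := Finset.card_pos.2 ⟨f, hfA⟩
      exact_mod_cast this
    · exact_mod_cast Finset.card_le_univ _
  obtain ⟨μ, hμ, hm⟩ := hglob
  exact mem_fPolPlus_of_UFP hμ (lt_of_lt_of_le (by positivity) hm)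

end S14


/-- If `Γ` (possibly infinite) is a core in the fractional sense, then some
finite sublanguage `Γ' ⊆ Γ` has the same unary positive clone. -/
theorem exists_finite_sublanguage_same_unary_fPolPlus {D : Type} [Fintype D] [DecidableEq D]
    [Nonempty D] (Γ : VLang D)
    (hcore : ∀ f ∈ fPolPlus Γ 1, Function.Bijective (unaryFun f)) :
    ∃ Γ' : VLang D, Γ' ⊆ Γ ∧ Γ'.Finite ∧ fPolPlus Γ 1 = fPolPlus Γ' 1 := by
  classical
  have hV : {n : ℕ | ∃ S : VLang D, S ⊆ Γ ∧ S.Finite ∧ (fPolPlus S 1).ncard = n}.Nonempty :=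
    ⟨(fPolPlus (∅ : VLang D) 1).ncard, ∅, Set.empty_subset Γ, Set.finite_empty, rfl⟩
  obtain ⟨S₀, hS₀1, hS₀2, hS₀3⟩ := Nat.sInf_mem hV
  refine ⟨S₀, hS₀1, hS₀2, ?_⟩
  apply Set.Subset.antisymm
  · exact S14.fPolPlus_antitone hS₀1
  · intro f hf
    apply S14.crux Γ hcore
    intro S hS hfin
    have hsub : fPolPlus (S₀ ∪ S) 1 ⊆ fPolPlus S₀ 1 :=
      S14.fPolPlus_antitone Set.subset_union_left
    have hcard : (fPolPlus S₀ 1).ncard ≤ (fPolPlus (S₀ ∪ S) 1).ncard := by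
      rw [hS₀3]
      exact Nat.sInf_le ⟨S₀ ∪ S, Set.union_subset hS₀1 hS, hS₀2.union hfin, rfl⟩
    have heq : fPolPlus (S₀ ∪ S) 1 = fPolPlus S₀ 1 :=
      Set.eq_of_subset_of_ncard_le hsub hcard (Set.toFinite _)
    have hf' : f ∈ fPolPlus (S₀ ∪ S) 1 := heq ▸ hf
    exact S14.fPolPlus_antitone Set.subset_union_right hf'
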